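/- arXiv:1401.0512 — 3 statements merged into one kernel-verified Lean document; each statement's English description precedes it below -/
import Mathlib

section
/- Let g be a 6-dimensional Lie algebra admitting a basis ω¹, ω², ω³ of (1,0)-forms with structure equations dω¹ = A ω¹∧(ω³+ω̄³), dω² = −A ω²∧(ω³+ω̄³), dω³ = 0, where A = cos θ + i sin θ with θ ∈ [0, π). If θ = 0 then g is isomorphic to the Lie algebra g₁ = (e^{15}, −e^{25}, −e^{35}, e^{45}, 0, 0); if θ ∈ (0, π) then g is isomorphic to g₂^{|α|} with α = −cos θ / sin θ, where g₂^α = (α e^{15}+e^{25}, −e^{15}+α e^{25}, −α e^{35}+e^{45}, −e^{35}−α e^{45}, 0, 0). -/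
/-- a 6-dimensional real Lie algebra with a basis `β¹,…,β⁶` whose
Chevalley–Eilenberg equations are those of the reduced complex equations
`dω¹ = Aω¹∧(ω³+ω̄³)`, `dω² = −Aω²∧(ω³+ω̄³)`, `dω³ = 0` with `A = cosθ + i sinθ`
(equivalently, in terms of brackets:
`[β₁,β₅] = −(cosθ β₁ + sinθ β₂)`, `[β₂,β₅] = sinθ β₁ − cosθ β₂`,
`[β₃,β₅] = cosθ β₃ + sinθ β₄`, `[β₄,β₅] = −sinθ β₃ + cosθ β₄`, all other brackets
of basis elements zero) is isomorphic to `g₁` if `θ = 0`, and to `g₂^{|cosθ/sinθ|}`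
if `θ ∈ (0,π)`; an isomorphism is exhibited by a basis with the target structure
equations. -/
theorem stmt5 (g : Type*) [LieRing g] [LieAlgebra ℝ g]
    (θ : ℝ) (hθ0 : 0 ≤ θ) (hθπ : θ < Real.pi)
    (β : Module.Basis (Fin 6) ℝ g)
    (h15 : ⁅β 0, β 4⁆ = -(Real.cos θ • β 0 + Real.sin θ • β 1))
    (h25 : ⁅β 1, β 4⁆ = Real.sin θ • β 0 - Real.cos θ • β 1)
    (h35 : ⁅β 2, β 4⁆ = Real.cos θ • β 2 + Real.sin θ • β 3)
    (h45 : ⁅β 3, β 4⁆ = -Real.sin θ • β 2 + Real.cos θ • β 3)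
    (h56 : ⁅β 4, β 5⁆ = 0)
    (hrest : ∀ i j : Fin 6, i ≠ 4 → j ≠ 4 → ⁅β i, β j⁆ = 0) :
    (θ = 0 → ∃ f : Module.Basis (Fin 6) ℝ g,
      -- structure equations of g₁ = (e¹⁵, −e²⁵, −e³⁵, e⁴⁵, 0, 0)
      ⁅f 0, f 4⁆ = -f 0 ∧ ⁅f 1, f 4⁆ = f 1 ∧ ⁅f 2, f 4⁆ = f 2 ∧ ⁅f 3, f 4⁆ = -f 3 ∧
      ⁅f 4, f 5⁆ = 0 ∧ ∀ i j : Fin 6, i ≠ 4 → j ≠ 4 → ⁅f i, f j⁆ = 0) ∧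
    (0 < θ → ∀ α : ℝ, α = |Real.cos θ / Real.sin θ| →
      ∃ f : Module.Basis (Fin 6) ℝ g,
      -- structure equations of g₂^α =
      -- (αe¹⁵+e²⁵, −e¹⁵+αe²⁵, −αe³⁵+e⁴⁵, −e³⁵−αe⁴⁵, 0, 0)
      ⁅f 0, f 4⁆ = -(α • f 0) + f 1 ∧ ⁅f 1, f 4⁆ = -f 0 - α • f 1 ∧
      ⁅f 2, f 4⁆ = α • f 2 + f 3 ∧ ⁅f 3, f 4⁆ = -f 2 + α • f 3 ∧
      ⁅f 4, f 5⁆ = 0 ∧ ∀ i j : Fin 6, i ≠ 4 → j ≠ 4 → ⁅f i, f j⁆ = 0) := by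
  constructor
  · intro h0; subst h0
    simp only [Real.cos_zero, Real.sin_zero, one_smul, zero_smul, add_zero, zero_add,
      sub_zero, zero_sub, neg_zero, neg_smul] at h15 h25 h35 h45
    let e : Equiv.Perm (Fin 6) :=
      ⟨![0, 3, 1, 2, 4, 5], ![0, 2, 3, 1, 4, 5], by decide, by decide⟩
    refine ⟨β.reindex e, ?_, ?_, ?_, ?_, ?_, ?_⟩
    · simpa [e, Module.Basis.reindex_apply] using h15
    · simpa [e, Module.Basis.reindex_apply] using h35
    · simpa [e, Module.Basis.reindex_apply] using h45
    · simpa [e, Module.Basis.reindex_apply] using h25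
    · simpa [e, Module.Basis.reindex_apply] using h56
    · intro i j hi hj
      have hi' : e.symm i ≠ 4 := by revert hi; revert i; decide
      have hj' : e.symm j ≠ 4 := by revert hj; revert j; decide
      simpa [Module.Basis.reindex_apply] using hrest _ _ hi' hj'
  · intro hpos α hα
    have hs : 0 < Real.sin θ := Real.sin_pos_of_pos_of_lt_pi hpos hθπ
    have hs' : Real.sin θ ≠ 0 := ne_of_gt hs
    have hu : (1 / Real.sin θ) ≠ 0 := one_div_ne_zero hs'
    rcases le_or_gt 0 (Real.cos θ) with hc | hc
    · have hα' : α = Real.cos θ / Real.sin θ := by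
        rw [hα, abs_of_nonneg (div_nonneg hc hs.le)]
      let u : Fin 6 → ℝˣ := ![1, -1, 1, 1, Units.mk0 _ hu, 1]
      let f := β.unitsSMul u
      have hf : ∀ i, f i = (u i : ℝ) • β i := fun i => by
        rw [Module.Basis.unitsSMul_apply, Units.smul_def]
      have F0 : f 0 = β 0 := by
        rw [hf, show ((u 0 : ℝ)) = 1 from rfl, one_smul]
      have F1 : f 1 = -β 1 := by
        rw [hf, show ((u 1 : ℝ)) = -1 from rfl, neg_one_smul]
      have F2 : f 2 = β 2 := by
        rw [hf, show ((u 2 : ℝ)) = 1 from rfl, one_smul]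
      have F3 : f 3 = β 3 := by
        rw [hf, show ((u 3 : ℝ)) = 1 from rfl, one_smul]
      have F4 : f 4 = (1 / Real.sin θ) • β 4 := by
        rw [hf, show ((u 4 : ℝ)) = 1 / Real.sin θ from rfl]
      have F5 : f 5 = β 5 := by
        rw [hf, show ((u 5 : ℝ)) = 1 from rfl, one_smul]
      refine ⟨f, ?_, ?_, ?_, ?_, ?_, ?_⟩
      · rw [F0, F1, F4, lie_smul, h15, hα']
        match_scalars <;> field_simp
      · rw [F0, F1, F4, lie_smul, neg_lie, h25, hα']
        match_scalars <;> field_simp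
      · rw [F2, F3, F4, lie_smul, h35, hα']
        match_scalars <;> field_simp
      · rw [F2, F3, F4, lie_smul, h45, hα']
        match_scalars <;> field_simp
      · rw [F4, F5, smul_lie, h56, smul_zero]
      · intro i j hi hj
        rw [hf, hf, lie_smul, smul_lie, hrest i j hi hj, smul_zero, smul_zero]
    · have hα' : α = -(Real.cos θ / Real.sin θ) := by
        rw [hα, abs_of_neg (div_neg_of_neg_of_pos hc hs)]
      let e : Equiv.Perm (Fin 6) :=
        ⟨![2, 3, 0, 1, 4, 5], ![2, 3, 0, 1, 4, 5], by decide, by decide⟩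
      let b := β.reindex e
      let u : Fin 6 → ℝˣ := ![1, 1, 1, -1, Units.mk0 _ hu, 1]
      let f := b.unitsSMul u
      have hf : ∀ i, f i = (u i : ℝ) • β (e.symm i) := fun i => by
        rw [Module.Basis.unitsSMul_apply, Units.smul_def, Module.Basis.reindex_apply]
      have F0 : f 0 = β 2 := by
        rw [hf, show ((u 0 : ℝ)) = 1 from rfl, one_smul,
          show (e.symm 0) = 2 from rfl]
      have F1 : f 1 = β 3 := by
        rw [hf, show ((u 1 : ℝ)) = 1 from rfl, one_smul,
          show (e.symm 1) = 3 from rfl]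
      have F2 : f 2 = β 0 := by
        rw [hf, show ((u 2 : ℝ)) = 1 from rfl, one_smul,
          show (e.symm 2) = 0 from rfl]
      have F3 : f 3 = -β 1 := by
        rw [hf, show ((u 3 : ℝ)) = -1 from rfl, neg_one_smul,
          show (e.symm 3) = 1 from rfl]
      have F4 : f 4 = (1 / Real.sin θ) • β 4 := by
        rw [hf, show ((u 4 : ℝ)) = 1 / Real.sin θ from rfl,
          show (e.symm 4) = 4 from rfl]
      have F5 : f 5 = β 5 := by
        rw [hf, show ((u 5 : ℝ)) = 1 from rfl, one_smul,
          show (e.symm 5) = 5 from rfl]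
      refine ⟨f, ?_, ?_, ?_, ?_, ?_, ?_⟩
      · rw [F0, F1, F4, lie_smul, h35, hα']
        match_scalars <;> field_simp
      · rw [F0, F1, F4, lie_smul, h45, hα']
        match_scalars <;> field_simp
      · rw [F2, F3, F4, lie_smul, h15, hα']
        match_scalars <;> field_simp
      · rw [F2, F3, F4, lie_smul, neg_lie, h25, hα']
        match_scalars <;> field_simp
      · rw [F4, F5, smul_lie, h56, smul_zero]
      · intro i j hi hj
        have hi' : e.symm i ≠ 4 := by revert hi; revert i; decide
        have hj' : e.symm j ≠ 4 := by revert hj; revert j; decide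
        rw [hf, hf, lie_smul, smul_lie, hrest _ _ hi' hj', smul_zero, smul_zero]
end

section
/- For l ∈ ℤ, l > 0, m ∈ ℤ, m > 2, set α = (1/(lπ)) log((m+√(m²−4))/2) and t = lπ. Let B_α be the 4×4 real matrix with 2×2 diagonal blocks ((−α, 1),(−1, −α)) and ((α, 1),(−1, α)). Then the matrix exponential e^{tB_α} has characteristic polynomial p(λ) = (1 − (−1)^l(e^{αt} + e^{−αt})λ + λ²)² = (λ² − (−1)^l m λ + 1)², which has integer coefficients. -/
open Polynomial

/-- The ring embedding `ℂ × ℂ → M₄(ℝ)` sending each complex factor to its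
standard `2×2` real representation, placed as diagonal blocks. -/
noncomputable def phiFun (p : ℂ × ℂ) : Matrix (Fin 4) (Fin 4) ℝ :=
  !![p.1.re, p.1.im, 0, 0; -p.1.im, p.1.re, 0, 0;
     0, 0, p.2.re, p.2.im; 0, 0, -p.2.im, p.2.re]

noncomputable def phi : ℂ × ℂ →+* Matrix (Fin 4) (Fin 4) ℝ where
  toFun := phiFun
  map_one' := by
    ext i j
    fin_cases i <;> fin_cases j <;>
      simp [phiFun, Matrix.vecHead, Matrix.vecTail, Matrix.one_apply]
  map_mul' p q := by
    ext i j
    fin_cases i <;> fin_cases j <;>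
      simp [phiFun, Matrix.vecHead, Matrix.vecTail, Matrix.mul_apply, Fin.sum_univ_four, Complex.mul_re, Complex.mul_im] <;>
      ring
  map_zero' := by
    ext i j
    fin_cases i <;> fin_cases j <;> simp [phiFun, Matrix.vecHead, Matrix.vecTail]
  map_add' p q := by
    ext i j
    fin_cases i <;> fin_cases j <;> simp [phiFun, Matrix.vecHead, Matrix.vecTail] <;> ring

lemma phi_continuous : Continuous phi := by
  show Continuous phiFun
  apply continuous_matrix
  intro i j
  fin_cases i <;> fin_cases j <;> simp [phiFun, Matrix.vecHead, Matrix.vecTail] <;> fun_prop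

lemma charpoly_diag4 (a b : ℝ) :
    (!![a, 0, 0, 0; 0, a, 0, 0; 0, 0, b, 0; 0, 0, 0, b] :
      Matrix (Fin 4) (Fin 4) ℝ).charpoly = ((X - C a) * (X - C b)) ^ 2 := by
  have hM : (!![a, 0, 0, 0; 0, a, 0, 0; 0, 0, b, 0; 0, 0, 0, b] :
      Matrix (Fin 4) (Fin 4) ℝ) = Matrix.diagonal ![a, a, b, b] := by
    ext i j
    fin_cases i <;> fin_cases j <;>
      simp [Matrix.diagonal_apply, Matrix.vecHead, Matrix.vecTail]
  have hch : (Matrix.diagonal ![a, a, b, b]).charmatrix =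
      Matrix.diagonal ![X - C a, X - C a, X - C b, X - C b] := by
    ext i j
    by_cases h : i = j
    · subst h
      fin_cases i <;>
        simp [Matrix.charmatrix_apply_eq, Matrix.diagonal_apply, Matrix.vecHead, Matrix.vecTail]
    · rw [Matrix.charmatrix_apply_ne _ _ _ h, Matrix.diagonal_apply_ne _ h,
        Matrix.diagonal_apply_ne _ h, map_zero, neg_zero]
  rw [Matrix.charpoly, hM, hch, Matrix.det_diagonal, Fin.prod_univ_four]
  simp [Matrix.vecHead, Matrix.vecTail]
  ring

/-- characteristic polynomial of the matrix exponential `e^{tB_α}` at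
`t = lπ`, `α = α_{l,m}`, equals `(λ² − (−1)^l m λ + 1)²`, with integer coefficients. -/
theorem stmt6 (l m : ℤ) (hl : 0 < l) (hm : 2 < m)
    (α : ℝ) (hα : α = (1 / (l * Real.pi)) * Real.log ((m + Real.sqrt ((m : ℝ) ^ 2 - 4)) / 2))
    (t : ℝ) (ht : t = l * Real.pi)
    (B : Matrix (Fin 4) (Fin 4) ℝ)
    (hB : B = !![-α, 1, 0, 0; -1, -α, 0, 0; 0, 0, α, 1; 0, 0, -1, α]) :
    (NormedSpace.exp (t • B)).charpoly =
      (X ^ 2 - C ((-1 : ℝ) ^ l * (Real.exp (α * t) + Real.exp (-α * t))) * X + 1) ^ 2 ∧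
    (NormedSpace.exp (t • B)).charpoly =
      (X ^ 2 - C ((-1 : ℝ) ^ l * (m : ℝ)) * X + 1) ^ 2 ∧
    ∃ q : Polynomial ℤ, q.map (Int.castRingHom ℝ) = (NormedSpace.exp (t • B)).charpoly := by
  have hm2 : (2 : ℝ) < (m : ℝ) := by exact_mod_cast hm
  have hsqnn : (0 : ℝ) ≤ (m : ℝ) ^ 2 - 4 := by nlinarith
  have hsq : Real.sqrt ((m : ℝ) ^ 2 - 4) ^ 2 = (m : ℝ) ^ 2 - 4 := Real.sq_sqrt hsqnn
  set r : ℝ := ((m : ℝ) + Real.sqrt ((m : ℝ) ^ 2 - 4)) / 2 with hr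
  have hrpos : 0 < r := by
    have := Real.sqrt_nonneg ((m : ℝ) ^ 2 - 4); rw [hr]; linarith
  have hl0 : (l : ℝ) ≠ 0 := by exact_mod_cast hl.ne'
  have hαt : α * t = Real.log r := by
    rw [hα, ht]; field_simp
  have hexp : Real.exp (α * t) = r := by rw [hαt, Real.exp_log hrpos]
  have hrinv : r⁻¹ = ((m : ℝ) - Real.sqrt ((m : ℝ) ^ 2 - 4)) / 2 := by
    refine inv_eq_of_mul_eq_one_right ?_
    rw [hr]; linear_combination (-(1 : ℝ)/4) * hsq
  have hexpneg : Real.exp (-(α * t)) = ((m : ℝ) - Real.sqrt ((m : ℝ) ^ 2 - 4)) / 2 := by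
    rw [Real.exp_neg, hexp, hrinv]
  have hsum : Real.exp (α * t) + Real.exp (-α * t) = (m : ℝ) := by
    rw [neg_mul, hexp, hexpneg, hr]; ring
  have hcos : Real.cos t = (-1 : ℝ) ^ l := by
    have := Real.cos_int_mul_pi_sub 0 l
    rw [ht]
    simpa using this
  have hsin : Real.sin t = 0 := by rw [ht]; exact Real.sin_int_mul_pi l
  -- the two complex numbers whose block representation is `t • B`
  set z : ℂ := (↑(-(α * t)) : ℂ) + ↑t * Complex.I with hz
  set w : ℂ := (↑(α * t) : ℂ) + ↑t * Complex.I with hw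
  have hzre : z.re = -(α * t) := by simp [hz]
  have hzim : z.im = t := by simp [hz]
  have hwre : w.re = α * t := by simp [hw]
  have hwim : w.im = t := by simp [hw]
  have hφB : phi (z, w) = t • B := by
    show phiFun (z, w) = t • B
    ext i j
    fin_cases i <;> fin_cases j <;>
      simp [phiFun, Matrix.vecHead, Matrix.vecTail, hB, hzre, hzim, hwre, hwim] <;> ring
  -- exponentials of z and w
  set c : ℝ := (-1 : ℝ) ^ l with hc
  have hcexpz : Complex.exp z = ((Real.exp (-(α * t)) * c : ℝ) : ℂ) := by
    rw [hz, Complex.exp_add, Complex.exp_mul_I, ← Complex.ofReal_cos, ← Complex.ofReal_sin,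
      hcos, hsin, ← Complex.ofReal_exp]
    push_cast
    ring
  have hcexpw : Complex.exp w = ((Real.exp (α * t) * c : ℝ) : ℂ) := by
    rw [hw, Complex.exp_add, Complex.exp_mul_I, ← Complex.ofReal_cos, ← Complex.ofReal_sin,
      hcos, hsin, ← Complex.ofReal_exp]
    push_cast
    ring
  set a : ℝ := Real.exp (-(α * t)) * c with ha
  set b : ℝ := Real.exp (α * t) * c with hb
  have hexpzw : NormedSpace.exp ((z, w) : ℂ × ℂ) = (((a : ℝ) : ℂ), ((b : ℝ) : ℂ)) := by
    have h1 : (NormedSpace.exp ((z, w) : ℂ × ℂ)).1 = NormedSpace.exp z := Prod.fst_exp _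
    have h2 : (NormedSpace.exp ((z, w) : ℂ × ℂ)).2 = NormedSpace.exp w := Prod.snd_exp _
    have hℝℂ : ∀ u : ℂ, NormedSpace.exp u = Complex.exp u := by
      intro u
      rw [← Complex.exp_eq_exp_ℂ]
    refine Prod.ext ?_ ?_
    · rw [h1, hℝℂ, hcexpz]
    · rw [h2, hℝℂ, hcexpw]
  have hE : NormedSpace.exp (t • B) =
      !![a, 0, 0, 0; 0, a, 0, 0; 0, 0, b, 0; 0, 0, 0, b] := by
    letI : SeminormedRing (Matrix (Fin 4) (Fin 4) ℝ) := Matrix.linftyOpSemiNormedRing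
    letI : NormedRing (Matrix (Fin 4) (Fin 4) ℝ) := Matrix.linftyOpNormedRing
    letI : NormedAlgebra ℝ (Matrix (Fin 4) (Fin 4) ℝ) := Matrix.linftyOpNormedAlgebra
    have e2 : NormedSpace.exp (t • B) = phi (((a : ℝ) : ℂ), ((b : ℝ) : ℂ)) := by
      rw [← hexpzw, ← hφB]
      exact (NormedSpace.map_exp phi phi_continuous _).symm
    rw [e2]
    show phiFun _ = _
    ext i j
    fin_cases i <;> fin_cases j <;> simp [phiFun, Matrix.vecHead, Matrix.vecTail]
  have hcc : c * c = 1 := by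
    rw [hc, ← zpow_add₀ (by norm_num : (-1 : ℝ) ≠ 0)]
    exact Even.neg_one_zpow ⟨l, rfl⟩
  have hab : a * b = 1 := by
    rw [ha, hb]
    have : Real.exp (-(α * t)) * Real.exp (α * t) = 1 := by
      rw [← Real.exp_add]; simp
    calc Real.exp (-(α * t)) * c * (Real.exp (α * t) * c)
        = (Real.exp (-(α * t)) * Real.exp (α * t)) * (c * c) := by ring
      _ = 1 := by rw [this, hcc, one_mul]
  have habX : ((X - C a) * (X - C b) : ℝ[X]) = X ^ 2 - C (a + b) * X + 1 := by
    have h1 : C a * C b = 1 := by rw [← map_mul, hab, map_one]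
    rw [map_add]
    linear_combination h1
  have haddab : a + b = (-1 : ℝ) ^ l * (Real.exp (α * t) + Real.exp (-α * t)) := by
    rw [ha, hb, hc, neg_mul]; ring
  have hmain : (NormedSpace.exp (t • B)).charpoly =
      (X ^ 2 - C ((-1 : ℝ) ^ l * (Real.exp (α * t) + Real.exp (-α * t))) * X + 1) ^ 2 := by
    rw [hE, charpoly_diag4, habX, haddab]
  have hmain2 : (NormedSpace.exp (t • B)).charpoly =
      (X ^ 2 - C ((-1 : ℝ) ^ l * (m : ℝ)) * X + 1) ^ 2 := by
    rw [hmain, hsum]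
  refine ⟨hmain, hmain2, ?_⟩
  rcases Int.even_or_odd l with he | ho
  · refine ⟨(X ^ 2 - C m * X + 1) ^ 2, ?_⟩
    rw [hmain2, he.neg_one_zpow, one_mul]
    simp [Polynomial.map_pow, Polynomial.map_add, Polynomial.map_sub, Polynomial.map_mul,
      Polynomial.map_one, Polynomial.map_pow]
  · refine ⟨(X ^ 2 - C (-m) * X + 1) ^ 2, ?_⟩
    rw [hmain2, ho.neg_one_zpow]
    simp [Polynomial.map_pow, Polynomial.map_add, Polynomial.map_sub, Polynomial.map_mul,
      Polynomial.map_one]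
end

section
/- Let h be the 5-dimensional nilpotent Lie algebra with basis e₁,…,e₅ and non-zero brackets [e₁,e₄] = −e₃, [e₁,e₅] = −e₂, [e₄,e₅] = −e₁, and let φ = ad_{e₆} be the derivation of h determined by the Lie algebra g₉ = B_{6,4}¹ with structure equations de¹ = e⁴⁵, de² = e¹⁵+e³⁶, de³ = e¹⁴−e²⁶+e⁵⁶, de⁴ = −e⁵⁶, de⁵ = e⁴⁶, de⁶ = 0. Then the characteristic polynomial of the linear map exp(tφ) : h → h is p(λ) = (λ−1)(λ² − 2λ cos t + 1)², which is integer for t = π. -/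
open Polynomial

set_option maxHeartbeats 2000000

open NormedSpace in
private lemma stmt8_exp_sq_zero (Y : Matrix (Fin 5) (Fin 5) ℝ) (h : Y * Y = 0) :
    exp Y = 1 + Y := by
  rw [exp_eq_tsum ℝ]
  show (∑' n : ℕ, ((n.factorial : ℝ))⁻¹ • Y ^ n) = 1 + Y
  have hz : ∀ n ∉ ({0, 1} : Finset ℕ), ((n.factorial : ℝ))⁻¹ • Y ^ n = 0 := by
    intro n hn
    simp only [Finset.mem_insert, Finset.mem_singleton] at hn
    obtain ⟨k, rfl⟩ : ∃ k, n = k + 2 := ⟨n - 2, by omega⟩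
    rw [pow_add, pow_two, h, mul_zero, smul_zero]
  rw [tsum_eq_sum hz]
  norm_num

private lemma stmt8_pow_odd_rot (A : Matrix (Fin 5) (Fin 5) ℝ) (h : A * A * A = -A) :
    ∀ k, A ^ (2 * k + 1) = ((-1 : ℝ)) ^ k • A := by
  intro k
  induction k with
  | zero => simp
  | succ n ih =>
    have : 2 * (n + 1) + 1 = (2 * n + 1) + 2 := by ring
    rw [this, pow_add, ih, pow_two, smul_mul_assoc, ← mul_assoc, h]
    rw [pow_succ]
    rw [mul_neg_one, smul_neg, ← neg_smul]

private lemma stmt8_pow_even_rot (A : Matrix (Fin 5) (Fin 5) ℝ) (h : A * A * A = -A) :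
    ∀ k, A ^ (2 * k + 2) = ((-1 : ℝ)) ^ k • (A * A) := by
  intro k
  induction k with
  | zero => simp [pow_two]
  | succ n ih =>
    have : 2 * (n + 1) + 2 = (2 * n + 2) + 2 := by ring
    rw [this, pow_add, ih, pow_two, smul_mul_assoc]
    have h4 : A * A * (A * A) = -(A * A) := by
      rw [← mul_assoc, h, neg_mul]
    rw [h4, pow_succ, mul_neg_one, smul_neg, ← neg_smul]

open NormedSpace in
private lemma stmt8_exp_rot (t : ℝ) (A : Matrix (Fin 5) (Fin 5) ℝ) (h : A * A * A = -A) :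
    exp (t • A) = 1 + Real.sin t • A + (1 - Real.cos t) • (A * A) := by
  have hodd : HasSum (fun k : ℕ => (((2 * k + 1).factorial : ℝ))⁻¹ • (t • A) ^ (2 * k + 1))
      (Real.sin t • A) := by
    have e : (fun k : ℕ => (((2 * k + 1).factorial : ℝ))⁻¹ • (t • A) ^ (2 * k + 1))
        = fun k : ℕ => ((-1) ^ k * t ^ (2 * k + 1) / ((2 * k + 1).factorial : ℝ)) • A := by
      funext k
      rw [_root_.smul_pow, stmt8_pow_odd_rot A h k, smul_smul, smul_smul]
      congr 1
      ring
    rw [e]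
    exact (Real.hasSum_sin t).smul_const A
  have heven : HasSum (fun k : ℕ => (((2 * k).factorial : ℝ))⁻¹ • (t • A) ^ (2 * k))
      (1 + (1 - Real.cos t) • (A * A)) := by
    have hshift : HasSum (fun n : ℕ => (((2 * (n + 1)).factorial : ℝ))⁻¹ • (t • A) ^ (2 * (n + 1)))
        ((1 - Real.cos t) • (A * A)) := by
      have hc : HasSum (fun n : ℕ => (-1) ^ (n + 1) * t ^ (2 * (n + 1)) / ((2 * (n + 1)).factorial : ℝ))
          (Real.cos t - 1) := by
        refine (hasSum_nat_add_iff
          (f := fun n : ℕ => (-1) ^ n * t ^ (2 * n) / ((2 * n).factorial : ℝ)) 1).2 ?_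
        simpa using Real.hasSum_cos t
      have hc' := hc.neg.smul_const (A * A)
      have e : (fun n : ℕ => (((2 * (n + 1)).factorial : ℝ))⁻¹ • (t • A) ^ (2 * (n + 1)))
          = fun n : ℕ =>
            (-((-1) ^ (n + 1) * t ^ (2 * (n + 1)) / ((2 * (n + 1)).factorial : ℝ))) • (A * A) := by
        funext n
        have h2 : 2 * (n + 1) = 2 * n + 2 := by ring
        rw [_root_.smul_pow, h2, stmt8_pow_even_rot A h n, smul_smul, smul_smul]
        congr 1
        ring
      rw [e, ← neg_sub (Real.cos t) 1]
      exact hc'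
    have := (hasSum_nat_add_iff
      (f := fun k : ℕ => (((2 * k).factorial : ℝ))⁻¹ • (t • A) ^ (2 * k)) 1).1 hshift
    rw [Finset.sum_range_one] at this
    norm_num at this
    rw [add_comm] at this
    exact this
  have hsum : HasSum (fun n : ℕ => ((n.factorial : ℝ))⁻¹ • (t • A) ^ n)
      ((1 + (1 - Real.cos t) • (A * A)) + Real.sin t • A) :=
    HasSum.even_add_odd (f := fun n : ℕ => ((n.factorial : ℝ))⁻¹ • (t • A) ^ n) heven hodd
  rw [exp_eq_tsum ℝ]
  show (∑' n : ℕ, ((n.factorial : ℝ))⁻¹ • (t • A) ^ n) = _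
  rw [hsum.tsum_eq]
  abel

private noncomputable def stmt8_Amat : Matrix (Fin 5) (Fin 5) ℝ :=
  !![0, 0, 0, 0, 0;
     0, 0, 1, 1/2, 0;
     0, -1, 0, 0, 1/2;
     0, 0, 0, 0, -1;
     0, 0, 0, 1, 0]

private noncomputable def stmt8_Nmat : Matrix (Fin 5) (Fin 5) ℝ :=
  !![0, 0, 0, 0, 0;
     0, 0, 0, -(1/2), 0;
     0, 0, 0, 0, 1/2;
     0, 0, 0, 0, 0;
     0, 0, 0, 0, 0]

private noncomputable def stmt8_Emat (t : ℝ) : Matrix (Fin 5) (Fin 5) ℝ :=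
  !![1, 0, 0, 0, 0;
     0, Real.cos t, Real.sin t, (Real.sin t - t * Real.cos t)/2, t * Real.sin t/2;
     0, -Real.sin t, Real.cos t, t * Real.sin t/2, (Real.sin t + t * Real.cos t)/2;
     0, 0, 0, Real.cos t, -Real.sin t;
     0, 0, 0, Real.sin t, Real.cos t]

private lemma stmt8_exp_formula (M : Matrix (Fin 5) (Fin 5) ℝ)
    (hM : M = !![0, 0, 0, 0, 0;
                 0, 0, 1, 0, 0;
                 0, -1, 0, 0, 1;
                 0, 0, 0, 0, -1;
                 0, 0, 0, 1, 0]) (t : ℝ) :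
    NormedSpace.exp (t • M) = stmt8_Emat t := by
  have hA3 : stmt8_Amat * stmt8_Amat * stmt8_Amat = -stmt8_Amat := by
    ext i j
    fin_cases i <;> fin_cases j <;>
      simp [stmt8_Amat, Matrix.mul_apply, Fin.sum_univ_five, Matrix.neg_apply,
        Matrix.cons_val', Matrix.cons_val_zero, Matrix.cons_val_one, Matrix.head_cons,
        Matrix.head_fin_const, Matrix.vecHead, Matrix.vecTail, Matrix.empty_val',
        Matrix.cons_val_fin_one]
  have hNN : stmt8_Nmat * stmt8_Nmat = 0 := by
    ext i j
    fin_cases i <;> fin_cases j <;>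
      simp [stmt8_Nmat, Matrix.mul_apply, Fin.sum_univ_five,
        Matrix.cons_val', Matrix.cons_val_zero, Matrix.cons_val_one, Matrix.head_cons,
        Matrix.head_fin_const, Matrix.vecHead, Matrix.vecTail, Matrix.empty_val',
        Matrix.cons_val_fin_one]
  have hANcomm : stmt8_Amat * stmt8_Nmat = stmt8_Nmat * stmt8_Amat := by
    ext i j
    fin_cases i <;> fin_cases j <;>
      simp [stmt8_Amat, stmt8_Nmat, Matrix.mul_apply, Fin.sum_univ_five,
        Matrix.cons_val', Matrix.cons_val_zero, Matrix.cons_val_one, Matrix.head_cons,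
        Matrix.head_fin_const, Matrix.vecHead, Matrix.vecTail, Matrix.empty_val',
        Matrix.cons_val_fin_one]
  have hMAN : M = stmt8_Amat + stmt8_Nmat := by
    rw [hM]
    ext i j
    fin_cases i <;> fin_cases j <;>
      simp [stmt8_Amat, stmt8_Nmat, Matrix.add_apply,
        Matrix.cons_val', Matrix.cons_val_zero, Matrix.cons_val_one, Matrix.head_cons,
        Matrix.head_fin_const, Matrix.vecHead, Matrix.vecTail, Matrix.empty_val',
        Matrix.cons_val_fin_one] <;> norm_num
  have hcomm : Commute (t • stmt8_Amat) (t • stmt8_Nmat) :=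
    (Commute.smul_left hANcomm t).smul_right t
  have hNt : (t • stmt8_Nmat) * (t • stmt8_Nmat) = 0 := by
    rw [Matrix.smul_mul, Matrix.mul_smul, hNN]
    simp
  rw [hMAN, smul_add, Matrix.exp_add_of_commute _ _ hcomm, stmt8_exp_rot t stmt8_Amat hA3,
    stmt8_exp_sq_zero _ hNt]
  ext i j
  fin_cases i <;> fin_cases j <;>
    simp [stmt8_Amat, stmt8_Nmat, stmt8_Emat, Matrix.mul_apply, Fin.sum_univ_five,
      Matrix.one_apply,
      Matrix.cons_val', Matrix.cons_val_zero, Matrix.cons_val_one, Matrix.head_cons,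
      Matrix.head_fin_const, Matrix.vecHead, Matrix.vecTail, Matrix.empty_val',
      Matrix.cons_val_fin_one] <;> ring

private lemma stmt8_charpoly_E (t : ℝ) :
    (stmt8_Emat t).charpoly = (X - 1) * (X ^ 2 - C (2 * Real.cos t) * X + 1) ^ 2 := by
  set c := Real.cos t
  set s := Real.sin t
  have hcm : (stmt8_Emat t).charmatrix =
      !![X - 1, 0, 0, 0, 0;
         0, X - C c, -C s, -C ((s - t*c)/2), -C (t*s/2);
         0, C s, X - C c, -C (t*s/2), -C ((s + t*c)/2);
         0, 0, 0, X - C c, C s;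
         0, 0, 0, -C s, X - C c] := by
    ext i j
    fin_cases i <;> fin_cases j <;>
      simp [stmt8_Emat, Matrix.charmatrix_apply, Matrix.diagonal_apply,
        Matrix.cons_val', Matrix.cons_val_zero, Matrix.cons_val_one, Matrix.head_cons,
        Matrix.head_fin_const, Matrix.vecHead, Matrix.vecTail, Matrix.empty_val',
        Matrix.cons_val_fin_one, map_neg, map_div₀, c, s]
  have h2c : (C (2 * c) : ℝ[X]) = 2 * C c := by
    simp [map_mul, map_ofNat]
  have hC1 : (C s) ^ 2 + (C c) ^ 2 = (1 : ℝ[X]) := by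
    rw [← map_pow, ← map_pow, ← map_add, Real.sin_sq_add_cos_sq, map_one]
  rw [Matrix.charpoly, hcm, h2c]
  rw [Matrix.det_succ_row_zero]
  simp only [Fin.sum_univ_succ, Fin.sum_univ_zero,
    Matrix.cons_val', Matrix.cons_val_zero, Matrix.cons_val_one, Matrix.head_cons,
    Matrix.head_fin_const, Matrix.vecHead, Matrix.vecTail, Matrix.empty_val',
    Matrix.cons_val_fin_one, Matrix.submatrix_apply, Matrix.det_succ_row_zero,
    Fin.succ_succAbove_zero, Fin.succ_succAbove_succ, Fin.succAbove_zero, Fin.zero_succAbove, Fin.one_succAbove_zero, Fin.one_succAbove_succ, Fin.succ_succAbove_one, Fin.one_succAbove_one, Matrix.of_apply, Function.comp, Matrix.cons_val_succ, Matrix.cons_val]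
  norm_num [Fin.lt_def]
  refine Or.inl ?_
  linear_combination ((((X - C c)^2 + (C s)^2) + (X^2 - 2 * C c * X + 1))) * hC1

/-- for the derivation `φ = ad_{e₆}` of the 5-dimensional nilradical `h` of
`g₉ = B₆,₄¹` (read off from the structure equations, in the basis `e₁,…,e₅` it is the
matrix `M` below), the characteristic polynomial of `exp(tφ)` is
`(λ−1)(λ²−2λcos t+1)²`, which has integer coefficients at `t = π`. -/
theorem stmt8 (M : Matrix (Fin 5) (Fin 5) ℝ)
    (hM : M = !![0, 0, 0, 0, 0;
                 0, 0, 1, 0, 0;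
                 0, -1, 0, 0, 1;
                 0, 0, 0, 0, -1;
                 0, 0, 0, 1, 0]) :
    (∀ t : ℝ, (NormedSpace.exp (t • M)).charpoly =
      (X - 1) * (X ^ 2 - C (2 * Real.cos t) * X + 1) ^ 2) ∧
    (NormedSpace.exp (Real.pi • M)).charpoly =
      (X - 1) * (X ^ 2 + 2 * X + 1) ^ 2 ∧
    ∃ q : Polynomial ℤ, q.map (Int.castRingHom ℝ) =
      (NormedSpace.exp (Real.pi • M)).charpoly := by
  have key : ∀ t : ℝ, (NormedSpace.exp (t • M)).charpoly =
      (X - 1) * (X ^ 2 - C (2 * Real.cos t) * X + 1) ^ 2 := by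
    intro t
    rw [stmt8_exp_formula M hM t, stmt8_charpoly_E]
  have hpi : (NormedSpace.exp (Real.pi • M)).charpoly =
      (X - 1) * (X ^ 2 + 2 * X + 1) ^ 2 := by
    rw [key Real.pi, Real.cos_pi]
    rw [show (2 : ℝ) * (-1) = -2 by norm_num, map_neg, map_ofNat]
    ring
  refine ⟨key, hpi, ⟨(X - 1) * (X ^ 2 + 2 * X + 1) ^ 2, ?_⟩⟩
  rw [hpi]
  simp [Polynomial.map_mul, Polynomial.map_pow, Polynomial.map_add, Polynomial.map_sub,
    Polynomial.map_one, Polynomial.map_X, Polynomial.map_ofNat]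
end
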